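/- arXiv:2010.08673 — 2 statements merged into one kernel-verified Lean document; each statement's English description precedes it below -/
import Mathlib

section
/- Let 𝕏 ∈ ℝ^{n×a}, 𝕐 ∈ ℝ^{n×b}, and let z ∈ ℝ^n and w ∈ ℝ^n. Assume S_X = 𝕏ᵀ𝕏/n, S_Y = 𝕐ᵀ𝕐/n, the Gram matrix of (𝕏, z) and the Gram matrix of (𝕐, w) are all positive definite. Let r = z − 𝕏(𝕏ᵀ𝕏)^{-1}𝕏ᵀ z and e = w − 𝕐(𝕐ᵀ𝕐)^{-1}𝕐ᵀ w be the least-squares residuals. Then ‖C(𝕐,(𝕏,z))‖_F² = ‖C(𝕐,𝕏)‖_F² + ‖C(𝕐,r)‖_F², and ‖C((𝕐,w),𝕏)‖_F² = ‖C(𝕐,𝕏)‖_F² + ‖C(e,𝕏)‖_F². -/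
open Matrix

noncomputable section

/-- Squared Frobenius norm of a real matrix: `‖M‖_F² = tr (M Mᵀ)`. -/
def frobSq {m n : Type*} [Fintype m] [Fintype n] (M : Matrix m n ℝ) : ℝ :=
  Matrix.trace (M * Mᵀ)

/-- Frobenius norm of a real matrix. -/
def frobNorm {m n : Type*} [Fintype m] [Fintype n] (M : Matrix m n ℝ) : ℝ :=
  Real.sqrt (frobSq M)

open scoped ComplexOrder in
/-- The square root of a positive semidefinite matrix, as defined in Mathlib of December 2024
(since removed from Mathlib). -/
def Matrix.PosSemidef.sqrt {𝕜 : Type*} [RCLike 𝕜] {n : Type*} [Fintype n] [DecidableEq n]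
    {A : Matrix n n 𝕜} (hA : A.PosSemidef) : Matrix n n 𝕜 :=
  hA.1.eigenvectorUnitary.1 * diagonal ((↑) ∘ Real.sqrt ∘ hA.1.eigenvalues) *
    (star hA.1.eigenvectorUnitary : Matrix n n 𝕜)

open Classical in
/-- `A^{-1/2}`: the inverse of the unique positive definite square root of a positive
definite matrix `A` (junk value `0` if `A` is not positive definite). -/
def invSqrt {n : Type*} [Fintype n] [DecidableEq n] (A : Matrix n n ℝ) : Matrix n n ℝ :=
  if h : A.PosDef then (h.posSemidef.sqrt)⁻¹ else 0

/-- The sample coherence matrix `C(𝕐,𝕏) = n⁻¹ S_Y^{-1/2} 𝕐ᵀ 𝕏 S_X^{-1/2}`, where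
`S_X = 𝕏ᵀ𝕏/n` and `S_Y = 𝕐ᵀ𝕐/n`. -/
def coh {ν a b : Type*} [Fintype ν] [Fintype a] [Fintype b] [DecidableEq a] [DecidableEq b]
    (N : ℕ) (Y : Matrix ν b ℝ) (X : Matrix ν a ℝ) : Matrix b a ℝ :=
  (N : ℝ)⁻¹ • (invSqrt ((N : ℝ)⁻¹ • (Yᵀ * Y)) * Yᵀ * X * invSqrt ((N : ℝ)⁻¹ • (Xᵀ * X)))

/-- The matrix obtained from `X` by appending the vector `z` as an extra column. -/
def appendCol {ν a : Type*} (X : Matrix ν a ℝ) (z : ν → ℝ) : Matrix ν (a ⊕ Unit) ℝ :=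
  Matrix.of fun i => Sum.elim (X i) fun _ => z i

/-- A vector viewed as a one-column matrix. -/
def colM {ν : Type*} (z : ν → ℝ) : Matrix ν Unit ℝ :=
  Matrix.of fun i _ => z i

/-- The least-squares residual of `z` regressed on the columns of `X`:
`r = z − X (XᵀX)⁻¹ Xᵀ z`. -/
def resid {ν a : Type*} [Fintype ν] [Fintype a] [DecidableEq a]
    (X : Matrix ν a ℝ) (z : ν → ℝ) : ν → ℝ :=
  z - (X * (Xᵀ * X)⁻¹ * Xᵀ).mulVec z

lemma ht {m n : Type*} (M : Matrix m n ℝ) : Mᴴ = Mᵀ :=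
  Matrix.conjTranspose_eq_transpose_of_trivial M

lemma psd_sqrt_transpose {n : Type*} [Fintype n] [DecidableEq n] {A : Matrix n n ℝ}
    (hA : A.PosSemidef) : (hA.sqrt)ᵀ = hA.sqrt := by
  unfold Matrix.PosSemidef.sqrt
  rw [Matrix.transpose_mul, Matrix.transpose_mul, Matrix.diagonal_transpose,
    Matrix.star_eq_conjTranspose, ht, Matrix.transpose_transpose]
  simp only [Matrix.mul_assoc]

lemma psd_sqrt_mul_self {n : Type*} [Fintype n] [DecidableEq n] {A : Matrix n n ℝ}
    (hA : A.PosSemidef) : hA.sqrt * hA.sqrt = A := by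
  unfold Matrix.PosSemidef.sqrt
  have hU : (star hA.1.eigenvectorUnitary : Matrix n n ℝ) * (hA.1.eigenvectorUnitary : Matrix n n ℝ)
      = 1 := Unitary.coe_star_mul_self _
  have hD : diagonal (RCLike.ofReal ∘ Real.sqrt ∘ hA.1.eigenvalues : n → ℝ) *
      diagonal (RCLike.ofReal ∘ Real.sqrt ∘ hA.1.eigenvalues : n → ℝ) = diagonal (RCLike.ofReal ∘ hA.1.eigenvalues : n → ℝ) := by
    rw [diagonal_mul_diagonal]
    congr 1
    ext i
    simp [Real.mul_self_sqrt (hA.eigenvalues_nonneg i)]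
  calc _ = (hA.1.eigenvectorUnitary : Matrix n n ℝ) * (diagonal (RCLike.ofReal ∘ Real.sqrt ∘ hA.1.eigenvalues : n → ℝ)
        * ((star hA.1.eigenvectorUnitary : Matrix n n ℝ) * (hA.1.eigenvectorUnitary : Matrix n n ℝ))
        * diagonal (RCLike.ofReal ∘ Real.sqrt ∘ hA.1.eigenvalues : n → ℝ)) * (star hA.1.eigenvectorUnitary : Matrix n n ℝ) := by
        simp only [Matrix.mul_assoc]
    _ = A := by
        rw [hU, Matrix.mul_one, hD]
        conv_rhs => rw [hA.1.spectral_theorem, Unitary.conjStarAlgAut_apply]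

lemma invSqrt_transpose {n : Type*} [Fintype n] [DecidableEq n] (A : Matrix n n ℝ) :
    (invSqrt A)ᵀ = invSqrt A := by
  unfold invSqrt
  split
  · rename_i h
    rw [Matrix.transpose_nonsing_inv]
    congr 1
    exact psd_sqrt_transpose h.posSemidef
  · simp

lemma posDef_smul {n : Type*} [Fintype n] [DecidableEq n] {A : Matrix n n ℝ} (hA : A.PosDef)
    {c : ℝ} (hc : 0 < c) : (c • A).PosDef := by
  refine Matrix.PosDef.of_dotProduct_mulVec_pos ?_ ?_
  · have h1 := hA.1
    unfold Matrix.IsHermitian at *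
    rw [ht] at h1 ⊢
    rw [Matrix.transpose_smul, h1]
  · intro x hx
    have := hA.dotProduct_mulVec_pos hx
    simp only [Matrix.smul_mulVec, dotProduct_smul, smul_eq_mul] at *
    positivity

lemma invSqrt_mul_self {n : Type*} [Fintype n] [DecidableEq n] {A : Matrix n n ℝ}
    (hA : A.PosDef) : invSqrt A * invSqrt A = A⁻¹ := by
  rw [invSqrt, dif_pos hA, ← Matrix.mul_inv_rev, psd_sqrt_mul_self hA.posSemidef]

variable {ν a b : Type*} [Fintype ν] [Fintype a] [Fintype b] [DecidableEq a] [DecidableEq b]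

lemma posDef_of_smul {A : Matrix a a ℝ} {N : ℕ} (h : ((N:ℝ)⁻¹ • A).PosDef)
    (hN : (N:ℝ) ≠ 0) : A.PosDef := by
  have : A = (N:ℝ) • ((N:ℝ)⁻¹ • A) := by rw [smul_smul, mul_inv_cancel₀ hN, one_smul]
  rw [this]
  exact posDef_smul h (by positivity)

lemma inv_smul_gram {A : Matrix a a ℝ} {N : ℕ} (h : ((N:ℝ)⁻¹ • A).PosDef)
    (hN : (N:ℝ) ≠ 0) : ((N:ℝ)⁻¹ • A)⁻¹ = (N:ℝ) • A⁻¹ := by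
  apply Matrix.inv_eq_right_inv
  have hA : A.PosDef := posDef_of_smul h hN
  rw [Matrix.smul_mul, Matrix.mul_smul, smul_smul, inv_mul_cancel₀ hN, one_smul,
    Matrix.mul_nonsing_inv _ (isUnit_iff_ne_zero.2 hA.det_pos.ne')]

lemma frobSq_coh (N : ℕ) (hN : (N:ℝ) ≠ 0) (Y : Matrix ν b ℝ) (X : Matrix ν a ℝ)
    (hX : ((N:ℝ)⁻¹ • (Xᵀ * X)).PosDef) (hY : ((N:ℝ)⁻¹ • (Yᵀ * Y)).PosDef) :
    frobSq (coh N Y X) =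
      Matrix.trace (Y * (Yᵀ * Y)⁻¹ * Yᵀ * (X * (Xᵀ * X)⁻¹ * Xᵀ)) := by
  set A := invSqrt ((N:ℝ)⁻¹ • (Yᵀ * Y)) with hAdef
  set B := invSqrt ((N:ℝ)⁻¹ • (Xᵀ * X)) with hBdef
  have hA2 : A * A = (N:ℝ) • (Yᵀ * Y)⁻¹ := by
    rw [hAdef, invSqrt_mul_self hY, inv_smul_gram hY hN]
  have hB2 : B * B = (N:ℝ) • (Xᵀ * X)⁻¹ := by
    rw [hBdef, invSqrt_mul_self hX, inv_smul_gram hX hN]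
  have hAs : Aᵀ = A := invSqrt_transpose _
  have hBs : Bᵀ = B := invSqrt_transpose _
  have key : (coh N Y X) * (coh N Y X)ᵀ
      = ((N:ℝ)⁻¹ * (N:ℝ)⁻¹) • (A * Yᵀ * X * (B * B) * Xᵀ * Y * A) := by
    rw [coh, ← hAdef, ← hBdef, Matrix.transpose_smul]
    rw [Matrix.smul_mul, Matrix.mul_smul, smul_smul]
    congr 1
    simp only [Matrix.transpose_mul, Matrix.transpose_transpose, hAs, hBs, Matrix.mul_assoc]
  rw [frobSq, key, Matrix.trace_smul, smul_eq_mul]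
  have step1 : Matrix.trace (A * Yᵀ * X * (B * B) * Xᵀ * Y * A)
      = Matrix.trace (A * A * (Yᵀ * X * (B * B) * Xᵀ * Y)) := by
    rw [Matrix.trace_mul_comm]
    congr 1
    simp only [Matrix.mul_assoc]
  rw [step1, hA2, hB2]
  have step2 : Yᵀ * X * ((N:ℝ) • (Xᵀ * X)⁻¹) * Xᵀ * Y
      = (N:ℝ) • (Yᵀ * X * (Xᵀ * X)⁻¹ * Xᵀ * Y) := by
    simp only [Matrix.mul_smul, Matrix.smul_mul]
  rw [step2, Matrix.smul_mul, Matrix.mul_smul, smul_smul,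
    Matrix.trace_smul, smul_eq_mul]
  have hn2 : (N:ℝ)⁻¹ * (N:ℝ)⁻¹ * ((N:ℝ) * (N:ℝ)) = 1 := by
    field_simp
  rw [← mul_assoc, hn2, one_mul]
  calc Matrix.trace ((Yᵀ * Y)⁻¹ * (Yᵀ * X * (Xᵀ * X)⁻¹ * Xᵀ * Y))
      = Matrix.trace (((Yᵀ * Y)⁻¹ * (Yᵀ * X * (Xᵀ * X)⁻¹ * Xᵀ)) * Y) := by
        congr 1; simp only [Matrix.mul_assoc]
    _ = Matrix.trace (Y * ((Yᵀ * Y)⁻¹ * (Yᵀ * X * (Xᵀ * X)⁻¹ * Xᵀ))) :=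
        Matrix.trace_mul_comm _ Y
    _ = Matrix.trace (Y * (Yᵀ * Y)⁻¹ * Yᵀ * (X * (Xᵀ * X)⁻¹ * Xᵀ)) := by
        congr 1; simp only [Matrix.mul_assoc]

lemma appendCol_eq (X : Matrix ν a ℝ) (z : ν → ℝ) :
    appendCol X z = fromCols X (colM z) := by
  ext i (j | j) <;> rfl

lemma colM_mulVec {m : Type*} [Fintype ν] (M : Matrix m ν ℝ) (v : ν → ℝ) :
    colM (M *ᵥ v) = M * colM v := by
  ext i j
  simp [colM, Matrix.mulVec, Matrix.mul_apply, dotProduct]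

lemma colM_sub (u v : ν → ℝ) : colM (u - v) = colM u - colM v := by
  ext i j; simp [colM]

lemma colM_transpose_mul (v w : ν → ℝ) :
    (colM v)ᵀ * colM w = (v ⬝ᵥ w) • (1 : Matrix Unit Unit ℝ) := by
  ext i j
  simp [colM, Matrix.mul_apply, dotProduct, Matrix.one_apply]

lemma colM_resid (X : Matrix ν a ℝ) (z : ν → ℝ) :
    colM (resid X z) = colM z - X * ((Xᵀ * X)⁻¹ * (Xᵀ * colM z)) := by
  rw [resid, colM_sub, colM_mulVec]
  simp only [Matrix.mul_assoc]

lemma resid_pos (X : Matrix ν a ℝ) (z : ν → ℝ)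
    (hG : ((appendCol X z)ᵀ * appendCol X z).PosDef) :
    0 < resid X z ⬝ᵥ resid X z := by
  set x : (a ⊕ Unit) → ℝ := Sum.elim (-(((Xᵀ * X)⁻¹ * Xᵀ) *ᵥ z)) (fun _ => (1:ℝ)) with hxdef
  have hx : x ≠ 0 := by
    intro h0
    have := congrFun h0 (Sum.inr ())
    simp [hxdef] at this
  have hWx : appendCol X z *ᵥ x = resid X z := by
    rw [appendCol_eq, hxdef, fromCols_mulVec_sumElim]
    have h1 : colM z *ᵥ (fun _ => (1:ℝ)) = z := by
      ext i; simp [colM, Matrix.mulVec, dotProduct]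
    rw [h1, Matrix.mulVec_neg, Matrix.mulVec_mulVec, resid]
    rw [← Matrix.mul_assoc]
    exact neg_add_eq_sub _ _
  have h2 := hG.dotProduct_mulVec_pos hx
  have hsx : star x = x := by simp
  rw [hsx, ← Matrix.mulVec_mulVec, Matrix.dotProduct_mulVec, Matrix.vecMul_transpose,
    hWx] at h2
  exact h2

lemma proj_decomp (X : Matrix ν a ℝ) (z : ν → ℝ)
    (hA : (Xᵀ * X).PosDef)
    (hG : ((appendCol X z)ᵀ * appendCol X z).PosDef) :
    appendCol X z * ((appendCol X z)ᵀ * appendCol X z)⁻¹ * (appendCol X z)ᵀ =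
      X * (Xᵀ * X)⁻¹ * Xᵀ +
        (resid X z ⬝ᵥ resid X z)⁻¹ • (colM (resid X z) * (colM (resid X z))ᵀ) := by
  have hρ : 0 < resid X z ⬝ᵥ resid X z := resid_pos X z hG
  set ρ := resid X z ⬝ᵥ resid X z with hρdef
  set G := Xᵀ * X with hGdef
  set Gi := G⁻¹ with hGidef
  set u := colM z with hudef
  set cr := colM (resid X z) with hcrdef
  have hGt : Gᵀ = G := by
    have := hA.1
    rwa [Matrix.IsHermitian, ht] at this
  have hGit : Giᵀ = Gi := by
    rw [hGidef, Matrix.transpose_nonsing_inv, hGt]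
  haveI : Invertible G := G.invertibleOfIsUnitDet (isUnit_iff_ne_zero.2 hA.det_pos.ne')
  have hiG : ⅟G = Gi := invOf_eq_nonsing_inv G
  have hGGi : G * Gi = 1 := Matrix.mul_nonsing_inv _ (isUnit_iff_ne_zero.2 hA.det_pos.ne')
  have hW : appendCol X z = fromCols X u := appendCol_eq X z
  have hWtW : (appendCol X z)ᵀ * appendCol X z
      = fromBlocks G (Xᵀ * u) (uᵀ * X) (uᵀ * u) := by
    rw [hW, transpose_fromCols, fromRows_mul_fromCols]
  have hcru : cr = u - X * (Gi * (Xᵀ * u)) := colM_resid X z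
  have hXcr : Xᵀ * cr = 0 := by
    rw [hcru, Matrix.mul_sub, ← Matrix.mul_assoc, ← hGdef, ← Matrix.mul_assoc, hGGi,
      Matrix.one_mul, sub_self]
  have h1 : crᵀ * cr = ρ • 1 := by
    rw [hcrdef, colM_transpose_mul, hρdef]
  have h2 : uᵀ * cr = ρ • 1 := by
    have hu : u = cr + X * (Gi * (Xᵀ * u)) := by rw [hcru, sub_add_cancel]
    rw [hu, Matrix.transpose_add, Matrix.add_mul, h1, Matrix.transpose_mul,
      Matrix.mul_assoc, hXcr, Matrix.mul_zero, add_zero]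
  have hschur : uᵀ * u - uᵀ * X * ⅟G * (Xᵀ * u) = ρ • (1 : Matrix Unit Unit ℝ) := by
    rw [hiG]
    have e : uᵀ * X * Gi * (Xᵀ * u) = uᵀ * (X * (Gi * (Xᵀ * u))) := by
      simp only [Matrix.mul_assoc]
    rw [e, ← Matrix.mul_sub, ← hcru, h2]
  haveI hinv1 : Invertible ((ρ:ℝ) • (1 : Matrix Unit Unit ℝ)) :=
    ⟨ρ⁻¹ • 1, by rw [Matrix.smul_mul, Matrix.mul_smul, smul_smul, Matrix.one_mul,
        inv_mul_cancel₀ hρ.ne', one_smul], by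
      rw [Matrix.smul_mul, Matrix.mul_smul, smul_smul, Matrix.one_mul,
        mul_inv_cancel₀ hρ.ne', one_smul]⟩
  haveI : Invertible (uᵀ * u - uᵀ * X * ⅟G * (Xᵀ * u)) := hschur ▸ hinv1
  have hGb : (fromBlocks G (Xᵀ * u) (uᵀ * X) (uᵀ * u)).PosDef := hWtW ▸ hG
  haveI : Invertible (fromBlocks G (Xᵀ * u) (uᵀ * X) (uᵀ * u)) :=
    Matrix.invertibleOfIsUnitDet _ (isUnit_iff_ne_zero.2 hGb.det_pos.ne')
  have hSi : ⅟(uᵀ * u - uᵀ * X * ⅟G * (Xᵀ * u)) = ρ⁻¹ • (1 : Matrix Unit Unit ℝ) :=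
    invOf_eq_right_inv (by
      rw [hschur, Matrix.smul_mul, Matrix.mul_smul, smul_smul, Matrix.one_mul,
        mul_inv_cancel₀ hρ.ne', one_smul])
  calc appendCol X z * ((appendCol X z)ᵀ * appendCol X z)⁻¹ * (appendCol X z)ᵀ
      = fromCols X u * ⅟(fromBlocks G (Xᵀ * u) (uᵀ * X) (uᵀ * u))
          * fromRows Xᵀ uᵀ := by
        rw [hWtW, ← Matrix.invOf_eq_nonsing_inv, hW, transpose_fromCols]
    _ = X * Gi * Xᵀ + ρ⁻¹ • (cr * crᵀ) := by
        rw [Matrix.invOf_fromBlocks₁₁_eq, hSi, hiG, fromCols_mul_fromBlocks,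
          fromCols_mul_fromRows, hcru]
        simp only [Matrix.transpose_sub, Matrix.transpose_mul, Matrix.transpose_transpose,
          hGit, Matrix.mul_sub, Matrix.sub_mul, Matrix.mul_add, Matrix.add_mul,
          Matrix.mul_neg, Matrix.neg_mul, Matrix.smul_mul, Matrix.mul_smul,
          Matrix.mul_one, Matrix.one_mul, smul_sub, smul_add, Matrix.mul_assoc]
        abel

lemma key (N : ℕ) (hN : (N:ℝ) ≠ 0) (Y : Matrix ν b ℝ) (X : Matrix ν a ℝ) (z : ν → ℝ)
    (hSX : ((N:ℝ)⁻¹ • (Xᵀ * X)).PosDef) (hSY : ((N:ℝ)⁻¹ • (Yᵀ * Y)).PosDef)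
    (hG : ((appendCol X z)ᵀ * appendCol X z).PosDef) :
    frobSq (coh N Y (appendCol X z)) =
      frobSq (coh N Y X) + frobSq (coh N Y (colM (resid X z))) := by
  have hA : (Xᵀ * X).PosDef := posDef_of_smul hSX hN
  have hρ := resid_pos X z hG
  set r := resid X z with hrdef
  set cr := colM r with hcrdef
  have hNpos : 0 < (N:ℝ) := lt_of_le_of_ne (Nat.cast_nonneg N) (Ne.symm hN)
  have hSW : ((N:ℝ)⁻¹ • ((appendCol X z)ᵀ * appendCol X z)).PosDef :=
    posDef_smul hG (inv_pos.2 hNpos)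
  have hrr : crᵀ * cr = (r ⬝ᵥ r) • 1 := colM_transpose_mul r r
  have hSr : ((N:ℝ)⁻¹ • (crᵀ * cr)).PosDef := by
    rw [hrr, smul_smul]
    exact posDef_smul Matrix.PosDef.one (by positivity)
  rw [frobSq_coh N hN Y (appendCol X z) hSW hSY,
      frobSq_coh N hN Y X hSX hSY,
      frobSq_coh N hN Y cr hSr hSY]
  have hdec := proj_decomp X z hA hG
  have hcrP : cr * (crᵀ * cr)⁻¹ * crᵀ = (r ⬝ᵥ r)⁻¹ • (cr * crᵀ) := by
    have hinv : (crᵀ * cr)⁻¹ = (r ⬝ᵥ r)⁻¹ • 1 := by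
      apply Matrix.inv_eq_right_inv
      rw [hrr, Matrix.smul_mul, Matrix.mul_smul, smul_smul, Matrix.one_mul,
        mul_inv_cancel₀ hρ.ne', one_smul]
    rw [hinv, Matrix.mul_smul, Matrix.mul_one, Matrix.smul_mul]
  rw [hdec, hcrP, Matrix.mul_add, Matrix.trace_add]

lemma frobSq_transpose {M : Matrix a b ℝ} : frobSq Mᵀ = frobSq M := by
  rw [frobSq, frobSq, Matrix.transpose_transpose, Matrix.trace_mul_comm]

lemma coh_transpose (N : ℕ) (Y : Matrix ν b ℝ) (X : Matrix ν a ℝ) :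
    (coh N Y X)ᵀ = coh N X Y := by
  rw [coh, coh, Matrix.transpose_smul]
  congr 1
  simp only [Matrix.transpose_mul, Matrix.transpose_transpose, invSqrt_transpose,
    Matrix.mul_assoc]

lemma frobSq_coh_comm (N : ℕ) (Y : Matrix ν b ℝ) (X : Matrix ν a ℝ) :
    frobSq (coh N Y X) = frobSq (coh N X Y) := by
  rw [← coh_transpose, frobSq_transpose]

/-- Increments of the sample Pillai trace `‖C‖_F²` when one variable is appended to one of the
two blocks (equations (15)–(16) of Lemma 1): with residuals `r = z − 𝕏(𝕏ᵀ𝕏)⁻¹𝕏ᵀz` and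
`e = w − 𝕐(𝕐ᵀ𝕐)⁻¹𝕐ᵀw`,
`‖C(𝕐,(𝕏,z))‖_F² = ‖C(𝕐,𝕏)‖_F² + ‖C(𝕐,r)‖_F²` and
`‖C((𝕐,w),𝕏)‖_F² = ‖C(𝕐,𝕏)‖_F² + ‖C(e,𝕏)‖_F²`. -/
theorem pillai_trace_increment_one_block (n a b : ℕ)
    (X : Matrix (Fin n) (Fin a) ℝ) (Y : Matrix (Fin n) (Fin b) ℝ)
    (z : Fin n → ℝ) (w : Fin n → ℝ)
    (hSX : ((n : ℝ)⁻¹ • (Xᵀ * X)).PosDef) (hSY : ((n : ℝ)⁻¹ • (Yᵀ * Y)).PosDef)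
    (hGX : ((appendCol X z)ᵀ * appendCol X z).PosDef)
    (hGY : ((appendCol Y w)ᵀ * appendCol Y w).PosDef) :
    frobSq (coh n Y (appendCol X z)) =
        frobSq (coh n Y X) + frobSq (coh n Y (colM (resid X z))) ∧
      frobSq (coh n (appendCol Y w) X) =
        frobSq (coh n Y X) + frobSq (coh n (colM (resid Y w)) X) := by
  have hn : (n : ℝ) ≠ 0 := by
    intro h0
    have hn0 : n = 0 := Nat.cast_eq_zero.mp h0
    subst hn0
    have hzero : (appendCol X z)ᵀ * appendCol X z = 0 := by
      ext i j
      simp [Matrix.mul_apply]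
    have hne : (Sum.elim 0 fun _ => (1:ℝ) : (Fin a ⊕ Unit) → ℝ) ≠ 0 := by
      intro hc
      simpa using congrFun hc (Sum.inr ())
    have := hGX.dotProduct_mulVec_pos hne
    rw [hzero] at this
    simp at this
  constructor
  · exact key n hn Y X z hSX hSY hGX
  · have h2 := key n hn X Y w hSY hSX hGY
    rw [frobSq_coh_comm n (appendCol Y w) X, frobSq_coh_comm n Y X,
      frobSq_coh_comm n (colM (resid Y w)) X]
    exact h2
end
end

section
/- Let Σ ∈ ℝ^{(p+q+1)×(p+q+1)} be a symmetric positive definite matrix partitioned into blocks Σ_X ∈ ℝ^{p×p}, Σ_Y ∈ ℝ^{q×q}, σ_Z ∈ ℝ (a scalar), with cross blocks Σ_XY = Σ_YXᵀ ∈ ℝ^{p×q}, Σ_XZ = Σ_ZXᵀ ∈ ℝ^{p×1}, Σ_YZ = Σ_ZYᵀ ∈ ℝ^{q×1}. Set σ_E = σ_Z − Σ_ZY Σ_Y^{-1} Σ_YZ and Σ_EX = Σ_ZX − Σ_ZY Σ_Y^{-1} Σ_YX ∈ ℝ^{1×p}, and let Σ_W = [[Σ_Y, Σ_YZ],[Σ_ZY,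 σ_Z]] ∈ ℝ^{(q+1)×(q+1)} and Σ_WX = [[Σ_YX],[Σ_ZX]] ∈ ℝ^{(q+1)×p}. Then σ_E > 0 and tr(Σ_W^{-1} Σ_WX Σ_X^{-1} Σ_WXᵀ) = tr(Σ_Y^{-1} Σ_YX Σ_X^{-1} Σ_XY) + σ_E^{-1} Σ_EX Σ_X^{-1} Σ_EXᵀ; in particular tr(Σ_W^{-1} Σ_WX Σ_X^{-1} Σ_WXᵀ) ≥ tr(Σ_Y^{-1} Σ_YX Σ_X^{-1} Σ_XY). -/
open Matrix

noncomputable section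

lemma posDef_submatrix_of_injective {m n : Type*} [Fintype m] [Fintype n] [DecidableEq m]
    [DecidableEq n] {M : Matrix n n ℝ} (hM : M.PosDef) {e : m → n}
    (he : Function.Injective e) : (M.submatrix e e).PosDef := by
  refine Matrix.PosDef.of_dotProduct_mulVec_pos ?_ ?_
  · have h1 := hM.1
    rw [Matrix.IsHermitian] at h1 ⊢
    rw [conjTranspose_submatrix, h1]
  · intro x hx
    set y : n → ℝ := fun j => ∑ i, if j = e i then x i else 0 with hy
    have hye : ∀ i, y (e i) = x i := by
      intro i
      simp [hy, he.eq_iff, eq_comm]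
    have hkey : ∀ f : n → ℝ, (∑ j, y j * f j) = ∑ i, x i * f (e i) := by
      intro f
      simp only [hy, Finset.sum_mul, ite_mul, zero_mul]
      rw [Finset.sum_comm]
      simp [Finset.sum_ite_eq']
    have hyne : y ≠ 0 := by
      obtain ⟨i, hi⟩ := Function.ne_iff.mp hx
      exact Function.ne_iff.mpr ⟨e i, by rw [hye i]; simpa using hi⟩
    have := hM.dotProduct_mulVec_pos hyne
    convert this using 1
    simp only [dotProduct, star_trivial, mulVec, submatrix_apply]
    rw [hkey fun j => ∑ k, M j k * y k]
    refine Finset.sum_congr rfl fun i _ => ?_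
    congr 1
    have h2 := hkey fun j => M (e i) j
    calc ∑ k, M (e i) (e k) * x k = ∑ k, x k * M (e i) (e k) :=
          Finset.sum_congr rfl fun j _ => mul_comm _ _
      _ = ∑ j, y j * M (e i) j := h2.symm
      _ = ∑ j, M (e i) j * y j := Finset.sum_congr rfl fun j _ => mul_comm _ _

lemma trace_fromBlocks' {m n R : Type*} [Fintype m] [Fintype n] [AddCommMonoid R]
    (A : Matrix m m R) (B : Matrix m n R) (C : Matrix n m R) (D : Matrix n n R) :
    (Matrix.fromBlocks A B C D).trace = A.trace + D.trace := by
  simp [Matrix.trace, Fintype.sum_sum_type, Matrix.diag]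

lemma trace_unit {R : Type*} [AddCommMonoid R] (M : Matrix Unit Unit R) :
    M.trace = M () () := by
  simp [Matrix.trace]

lemma key_trace {p q : ℕ} (Ai : Matrix (Fin q) (Fin q) ℝ) (hAi : Aiᵀ = Ai)
    (B : Matrix (Fin q) Unit ℝ) (C : Matrix (Fin q) (Fin p) ℝ) (E : Matrix Unit (Fin p) ℝ)
    (G : Matrix (Fin p) (Fin p) ℝ) (t : ℝ) :
    Matrix.trace ((Ai + t • (Ai * B * Bᵀ * Ai)) * (C * G * Cᵀ))
      + Matrix.trace ((-(t • (Ai * B))) * (E * G * Cᵀ))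
      + (Matrix.trace ((-(t • (Bᵀ * Ai))) * (C * G * Eᵀ))
      + Matrix.trace ((t • (1 : Matrix Unit Unit ℝ)) * (E * G * Eᵀ)))
    = Matrix.trace (Ai * C * G * Cᵀ)
      + t * (((E - Bᵀ * Ai * C) * G * (E - Bᵀ * Ai * C)ᵀ) () ()) := by
  have e1 : Matrix.trace (Ai * B * Bᵀ * Ai * (C * G * Cᵀ))
      = ((Bᵀ * (Ai * (C * (G * (Cᵀ * (Ai * B)))))) () ()) := by
    rw [show Ai * B * Bᵀ * Ai * (C * G * Cᵀ)
        = (Ai * B) * (Bᵀ * (Ai * (C * (G * Cᵀ)))) by simp only [Matrix.mul_assoc],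
      Matrix.trace_mul_comm, trace_unit]
    simp only [Matrix.mul_assoc]
  have e2 : Matrix.trace (Ai * (B * (E * (G * Cᵀ))))
      = ((E * (G * (Cᵀ * (Ai * B)))) () ()) := by
    rw [show Ai * (B * (E * (G * Cᵀ))) = (Ai * B) * (E * (G * Cᵀ)) by
      rw [Matrix.mul_assoc], Matrix.trace_mul_comm, trace_unit]
    simp only [Matrix.mul_assoc]
  simp only [Matrix.add_mul, Matrix.trace_add, smul_mul_assoc, Matrix.trace_smul,
    Matrix.neg_mul, Matrix.trace_neg, Matrix.one_mul, smul_eq_mul, e1, e2]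
  simp only [Matrix.smul_mul, Matrix.trace_smul, smul_eq_mul, transpose_sub,
    transpose_mul, transpose_transpose, hAi, Matrix.sub_mul, Matrix.mul_sub,
    Matrix.sub_apply, trace_unit, Matrix.mul_assoc, e1, e2]
  ring

/-- Population analogue of Lemma 1: if the joint covariance matrix of `(X, Y, Z)` (with `Z`
scalar) is positive definite, then the residual variance `σ_E = σ_Z − Σ_ZY Σ_Y⁻¹ Σ_YZ` is
positive and the Pillai trace of `(X, (Y, Z))` equals the Pillai trace of `(X, Y)` plus
`σ_E⁻¹ Σ_EX Σ_X⁻¹ Σ_EXᵀ`, where `Σ_EX = Σ_ZX − Σ_ZY Σ_Y⁻¹ Σ_YX`; in particular the Pillai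
trace does not decrease when `Z` is added to the `Y`-block. -/
theorem population_pillai_trace_increment (p q : ℕ)
    (SigX : Matrix (Fin p) (Fin p) ℝ) (SigY : Matrix (Fin q) (Fin q) ℝ)
    (SigXY : Matrix (Fin p) (Fin q) ℝ)
    (SigXZ : Matrix (Fin p) Unit ℝ) (SigYZ : Matrix (Fin q) Unit ℝ) (sZ : ℝ)
    (hpos : (Matrix.fromBlocks (Matrix.fromBlocks SigX SigXY SigXYᵀ SigY)
        (Matrix.fromRows SigXZ SigYZ) (Matrix.fromRows SigXZ SigYZ)ᵀ
        (Matrix.of fun _ _ => sZ)).PosDef) :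
    0 < sZ - (SigYZᵀ * SigY⁻¹ * SigYZ) () () ∧
      Matrix.trace ((Matrix.fromBlocks SigY SigYZ SigYZᵀ (Matrix.of fun _ _ => sZ))⁻¹ *
          Matrix.fromRows SigXYᵀ SigXZᵀ * SigX⁻¹ * (Matrix.fromRows SigXYᵀ SigXZᵀ)ᵀ) =
        Matrix.trace (SigY⁻¹ * SigXYᵀ * SigX⁻¹ * SigXY) +
          (sZ - (SigYZᵀ * SigY⁻¹ * SigYZ) () ())⁻¹ *
            (((SigXZᵀ - SigYZᵀ * SigY⁻¹ * SigXYᵀ) * SigX⁻¹ *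
              (SigXZᵀ - SigYZᵀ * SigY⁻¹ * SigXYᵀ)ᵀ) () ()) ∧
      Matrix.trace (SigY⁻¹ * SigXYᵀ * SigX⁻¹ * SigXY) ≤
        Matrix.trace ((Matrix.fromBlocks SigY SigYZ SigYZᵀ (Matrix.of fun _ _ => sZ))⁻¹ *
          Matrix.fromRows SigXYᵀ SigXZᵀ * SigX⁻¹ * (Matrix.fromRows SigXYᵀ SigXZᵀ)ᵀ) := by
  -- abbreviations
  set A := SigY with hA_def
  set B := SigYZ with hB_def
  set C := SigXYᵀ with hC_def
  set E := SigXZᵀ with hE_def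
  set D : Matrix Unit Unit ℝ := Matrix.of fun _ _ => sZ with hD_def
  set G := SigX⁻¹ with hG_def
  -- positive definiteness of submatrices
  have hX : SigX.PosDef := by
    have h := posDef_submatrix_of_injective hpos
      (e := fun i : Fin p => (Sum.inl (Sum.inl i) : (Fin p ⊕ Fin q) ⊕ Unit))
      (fun a b hab => by simpa using hab)
    convert h using 1
    rfl
  have hA : A.PosDef := by
    have h := posDef_submatrix_of_injective hpos
      (e := fun i : Fin q => (Sum.inl (Sum.inr i) : (Fin p ⊕ Fin q) ⊕ Unit))
      (fun a b hab => by simpa using hab)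
    convert h using 1
    rfl
  have hW : (Matrix.fromBlocks A B Bᵀ D).PosDef := by
    have h := posDef_submatrix_of_injective hpos
      (e := Sum.elim (fun i : Fin q => (Sum.inl (Sum.inr i) : (Fin p ⊕ Fin q) ⊕ Unit))
        (fun u => Sum.inr u))
      (by rintro (a | a) (b | b) hab <;> simp_all)
    convert h using 1
    ext (i | i) (j | j) <;>
      simp [Matrix.submatrix, Matrix.fromBlocks, Matrix.fromRows, Matrix.fromRows_apply_inr, hB_def, hD_def] <;> rfl
  haveI iA : Invertible A := hA.isUnit.invertible
  set Smat : Matrix Unit Unit ℝ := D - Bᵀ * A⁻¹ * B with hS_def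
  set s : ℝ := sZ - (Bᵀ * A⁻¹ * B) () () with hs_def
  have hsS : Smat () () = s := by
    simp [hS_def, hs_def, hD_def, Matrix.sub_apply]
  have hdet : (Matrix.fromBlocks A B Bᵀ D).det = A.det * s := by
    rw [Matrix.det_fromBlocks₁₁]
    congr 1
    rw [← hsS, hS_def, invOf_eq_nonsing_inv, Matrix.det_unique]
  have hs : 0 < s := by
    have h1 := hW.det_pos
    have h2 := hA.det_pos
    rw [hdet] at h1
    nlinarith
  haveI iS : Invertible Smat :=
    Smat.invertibleOfIsUnitDet (by rw [Matrix.det_unique, hsS]; exact (ne_of_gt hs).isUnit)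
  have hSinv : Smat⁻¹ = s⁻¹ • (1 : Matrix Unit Unit ℝ) := by
    rw [Matrix.inv_def, Matrix.adjugate_subsingleton, Matrix.det_unique, hsS,
      Ring.inverse_eq_inv']
  haveI iS' : Invertible (D - Bᵀ * ⅟A * B) := by
    rw [invOf_eq_nonsing_inv]; exact iS
  haveI iW : Invertible (Matrix.fromBlocks A B Bᵀ D) := Matrix.fromBlocks₁₁Invertible A B Bᵀ D
  have hWinv : (Matrix.fromBlocks A B Bᵀ D)⁻¹ =
      Matrix.fromBlocks (A⁻¹ + A⁻¹ * B * Smat⁻¹ * Bᵀ * A⁻¹) (-(A⁻¹ * B * Smat⁻¹))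
        (-(Smat⁻¹ * Bᵀ * A⁻¹)) Smat⁻¹ := by
    rw [← invOf_eq_nonsing_inv, Matrix.invOf_fromBlocks₁₁_eq]
    simp only [invOf_eq_nonsing_inv, hS_def]
  have hAT : Aᵀ = A := by
    have := hA.1
    rwa [Matrix.IsHermitian, conjTranspose_eq_transpose_of_trivial] at this
  have hAinvT : A⁻¹ᵀ = A⁻¹ := by rw [Matrix.transpose_nonsing_inv, hAT]
  have hSigXY : SigXY = Cᵀ := by rw [hC_def, transpose_transpose]
  have hW2 : (Matrix.fromBlocks A B Bᵀ D)⁻¹ =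
      Matrix.fromBlocks (A⁻¹ + s⁻¹ • (A⁻¹ * B * Bᵀ * A⁻¹)) (-(s⁻¹ • (A⁻¹ * B)))
        (-(s⁻¹ • (Bᵀ * A⁻¹))) (s⁻¹ • 1) := by
    rw [hWinv, hSinv]
    simp only [Matrix.mul_smul, Matrix.smul_mul, Matrix.mul_one, Matrix.one_mul,
      Matrix.mul_assoc]
  have hMGMT : Matrix.fromRows C E * (G * (Matrix.fromRows C E)ᵀ) =
      Matrix.fromBlocks (C * G * Cᵀ) (C * G * Eᵀ) (E * G * Cᵀ) (E * G * Eᵀ) := by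
    rw [← Matrix.mul_assoc, Matrix.fromRows_mul, Matrix.transpose_fromRows,
      Matrix.fromRows_mul_fromCols]
  have hquad : 0 ≤ ((E - Bᵀ * A⁻¹ * C) * G * (E - Bᵀ * A⁻¹ * C)ᵀ) () () := by
    have hps := (hX.inv.posSemidef).mul_mul_conjTranspose_same (E - Bᵀ * A⁻¹ * C)
    have h2 := hps.dotProduct_mulVec_nonneg (fun _ => (1 : ℝ))
    simpa [dotProduct, Matrix.mulVec, conjTranspose_eq_transpose_of_trivial,
      hG_def] using h2
  have heq : Matrix.trace ((Matrix.fromBlocks A B Bᵀ D)⁻¹ * Matrix.fromRows C E * G *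
        (Matrix.fromRows C E)ᵀ) =
      Matrix.trace (A⁻¹ * C * G * Cᵀ) + s⁻¹ *
        (((E - Bᵀ * A⁻¹ * C) * G * (E - Bᵀ * A⁻¹ * C)ᵀ) () ()) := by
    rw [Matrix.mul_assoc, Matrix.mul_assoc, hMGMT, hW2, Matrix.fromBlocks_multiply,
      trace_fromBlocks', Matrix.trace_add, Matrix.trace_add]
    exact key_trace A⁻¹ hAinvT B C E G s⁻¹
  rw [hSigXY]
  exact ⟨hs, heq, by
    rw [heq]
    exact le_add_of_nonneg_right (mul_nonneg (inv_nonneg.mpr hs.le) hquad)⟩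
end
end
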